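/- Let (R_n)_{n≥0} be a cyclic urn process with m types started with one ball of type 0 and fix n ≥ 1. Let (R'_j)_{j≥0} and (R''_j)_{j≥0} be cyclic urn processes with m types started with one ball of type 0, and let I be a random variable uniformly distributed on {0, 1, …, n−1}, with I, (R'_j)_{j≥0}, (R''_j)_{j≥0} defined on a common probability space and mutually independent. Then the ℝ^m-valued random vector R'_I + Aᵗ R''_{n−1−I} has the same distribution as R_n. -/

import Mathlib

open MeasureTheory ProbabilityTheory Filter Complex Finset Topology

noncomputable section

/-- `ω = exp(2πi/m)`, the `m`-th elementary root of unity. -/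
def cw (m : ℕ) : ℂ := Complex.exp (2 * Real.pi * Complex.I / m)

/-- `λ_k = cos(2πk/m)`. -/
def lam (m k : ℕ) : ℝ := Real.cos (2 * Real.pi * k / m)

/-- `μ_k = sin(2πk/m)`. -/
def muim (m k : ℕ) : ℝ := Real.sin (2 * Real.pi * k / m)

/-- the eigenvector `v_k = (1/m)(1, ω^{-k}, …, ω^{-(m-1)k})`. -/
def vvec (m k : ℕ) : Fin m → ℂ :=
  fun t => (m : ℂ)⁻¹ * cw m ^ (-((k * (t : ℕ) : ℕ) : ℤ))

/-- the dual coefficient `u_k(w) = ∑_t ω^{kt} w_t`. -/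
def ucoef (m k : ℕ) (w : Fin m → ℝ) : ℂ :=
  ∑ t : Fin m, cw m ^ (k * (t : ℕ)) * (w t : ℂ)

/-- the replacement matrix `A` of the cyclic urn. -/
def repA (m : ℕ) : Matrix (Fin m) (Fin m) ℝ :=
  Matrix.of fun i j => if (j : ℕ) = ((i : ℕ) + 1) % m then 1 else 0

/-- the filtration `𝓕_n = σ(R_0, …, R_n)`. -/
def urnFilt {Ω : Type*} [MeasurableSpace Ω] (m : ℕ) (R : ℕ → Ω → Fin m → ℝ) (n : ℕ) :
    MeasurableSpace Ω :=
  ⨆ i ∈ Finset.range (n + 1), MeasurableSpace.comap (R i) inferInstance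

/-- A cyclic urn process with `m` types started with one ball of type `j0`. -/
structure IsCyclicUrn {Ω : Type*} [MeasurableSpace Ω] (μ : Measure Ω) (m : ℕ) (j0 : Fin m)
    (R : ℕ → Ω → Fin m → ℝ) : Prop where
  isProb : IsProbabilityMeasure μ
  meas : ∀ n, Measurable (R n)
  natVal : ∀ n ω i, ∃ z : ℕ, R n ω i = z
  init : ∀ ω, R 0 ω = fun i => if i = j0 then 1 else 0
  step : ∀ n, ∀ j : Fin m,
    μ[Set.indicator {ω | R (n + 1) ω =
        fun i => R n ω i + if (i : ℕ) = ((j : ℕ) + 1) % m then 1 else 0}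
      (fun _ => (1 : ℝ)) | urnFilt m R n]
      =ᵐ[μ] fun ω => R n ω j / (n + 1)

/-- componentwise expectation `E[X]` of a random vector. -/
def expVec {Ω : Type*} [MeasurableSpace Ω] (μ : Measure Ω) {m : ℕ}
    (X : Ω → Fin m → ℝ) : Fin m → ℝ := fun i => ∫ ω, X ω i ∂μ

/-- the martingale `M_{k,n} = (Γ(n+1)/Γ(n+1+ω^k)) u_k(R_n - E[R_n])`, with `M_{k,0} = 0`. -/
def Mart {Ω : Type*} [MeasurableSpace Ω] (μ : Measure Ω) (m k : ℕ)
    (R : ℕ → Ω → Fin m → ℝ) (n : ℕ) (ω : Ω) : ℂ :=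
  if n = 0 then 0
  else (Complex.Gamma ((n : ℂ) + 1) / Complex.Gamma ((n : ℂ) + 1 + cw m ^ k)) *
    ucoef m k (fun t => R n ω t - expVec μ (R n) t)

/-- `ν` is the centered Gaussian distribution `𝒩(0, S)` on `ℝ^d` (Cramér–Wold
characterization: every linear functional is one-dimensional centered Gaussian). -/
def IsCenteredGaussian {d : ℕ} (ν : Measure (Fin d → ℝ)) (S : Matrix (Fin d) (Fin d) ℝ) : Prop :=
  IsProbabilityMeasure ν ∧
  ∀ l : Fin d → ℝ,
    ν.map (fun x => ∑ i, l i * x i) =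
      gaussianReal 0 (Real.toNNReal (∑ i, ∑ j, l i * S i j * l j))

/-- convergence in distribution of the random vectors `X_n` to the law `ν`. -/
def TendstoInDist {Ω : Type*} [MeasurableSpace Ω] (μ : Measure Ω) {d : ℕ}
    (X : ℕ → Ω → Fin d → ℝ) (ν : Measure (Fin d → ℝ)) : Prop :=
  ∀ f : BoundedContinuousFunction (Fin d → ℝ) ℝ,
    Tendsto (fun n => ∫ ω, f (X n ω) ∂μ) atTop (𝓝 (∫ x, f x ∂ν))



open scoped ENNReal
open scoped Classical

namespace S15
variable {M : ℕ}

abbrev Cfg (M : ℕ) := Fin (M+2) → ℕ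
abbrev RA (M : ℕ) := AddMonoidAlgebra ℝ≥0∞ (Cfg M)

instance raCoeFun : CoeFun (RA M) (fun _ => Cfg M → ℝ≥0∞) := ⟨fun L => L.coeff⟩

def econf (k : Fin (M+2)) : Cfg M := fun i => if i = k then 1 else 0

lemma sms (x y : Cfg M) (b c : ℝ≥0∞) :
    (AddMonoidAlgebra.single x b : RA M) * AddMonoidAlgebra.single y c
      = AddMonoidAlgebra.single (x+y) (b*c) :=
  AddMonoidAlgebra.single_mul_single x y b c

/-- multiply the coefficient at `s` by `s j`. -/
def Dop (j : Fin (M+2)) (L : RA M) : RA M :=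
  AddMonoidAlgebra.ofCoeff ⟨L.coeff.support.filter (fun s => s j ≠ 0), fun s => (s j : ℝ≥0∞) * L s, by
    intro a
    simp only [Finset.mem_filter, Finsupp.mem_support_iff, mul_ne_zero_iff, Nat.cast_ne_zero]
    tauto⟩

@[simp] lemma Dop_apply (j : Fin (M+2)) (L : RA M) (s : Cfg M) :
    Dop j L s = (s j : ℝ≥0∞) * L s := rfl

lemma Dop_support (j : Fin (M+2)) (L : RA M) :
    (Dop j L).coeff.support = L.coeff.support.filter (fun s => s j ≠ 0) := rfl

lemma Dop_single (j : Fin (M+2)) (s : Cfg M) (c : ℝ≥0∞) :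
    Dop j (AddMonoidAlgebra.single s c) = AddMonoidAlgebra.single s ((s j : ℝ≥0∞) * c) := by
  ext t
  rw [Dop_apply]
  simp only [AddMonoidAlgebra.coeff_single]
  rw [Finsupp.single_apply, Finsupp.single_apply]
  by_cases h : s = t
  · subst h; simp
  · simp [h]

lemma Dop_zero (j : Fin (M+2)) : Dop j (0 : RA M) = 0 := by
  ext t; simp

lemma Dop_add (j : Fin (M+2)) (P Q : RA M) : Dop j (P + Q) = Dop j P + Dop j Q := by
  ext t
  rw [AddMonoidAlgebra.coeff_add, Finsupp.add_apply, Dop_apply, Dop_apply, Dop_apply,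
    AddMonoidAlgebra.coeff_add, Finsupp.add_apply, mul_add]

lemma Dop_smul (j : Fin (M+2)) (c : ℝ≥0∞) (P : RA M) : Dop j (c • P) = c • Dop j P := by
  ext t
  rw [AddMonoidAlgebra.coeff_smul, Finsupp.smul_apply, Dop_apply, Dop_apply,
    AddMonoidAlgebra.coeff_smul, Finsupp.smul_apply, smul_eq_mul, smul_eq_mul]
  ring

lemma Dop_sum (j : Fin (M+2)) (L : RA M) (g : Cfg M → ℝ≥0∞ → ℝ≥0∞)
    (h0 : ∀ x, g x 0 = 0) :
    (Dop j L).coeff.sum g = L.coeff.sum fun x a => g x ((x j : ℝ≥0∞) * a) := by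
  rw [Finsupp.sum, Finsupp.sum, Dop_support, Finset.sum_filter]
  apply Finset.sum_congr rfl
  intro x _
  by_cases h : x j = 0
  · simp [h, h0]
  · simp [h]

lemma Dop_mul (j : Fin (M+2)) (P Q : RA M) :
    Dop j (P * Q) = Dop j P * Q + P * Dop j Q := by
  classical
  ext t
  rw [AddMonoidAlgebra.coeff_add, Finsupp.add_apply, Dop_apply, AddMonoidAlgebra.coeff_mul,
    AddMonoidAlgebra.coeff_mul, AddMonoidAlgebra.coeff_mul, Finsupp.mul_sum, Dop_sum j P _ (by intro x; simp [Finsupp.sum]),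
    ← Finsupp.sum_add]
  apply Finsupp.sum_congr
  intro x _
  rw [Dop_sum j Q _ (by intro y; simp), Finsupp.mul_sum, ← Finsupp.sum_add]
  apply Finsupp.sum_congr
  intro y _
  by_cases h : x + y = t
  · rw [if_pos h, if_pos h, if_pos h]
    have ht : t j = x j + y j := by rw [← h]; rfl
    rw [ht]
    push_cast
    ring
  · rw [if_neg h, if_neg h, if_neg h]
    simp

def SA (L : RA M) : RA M :=
  ∑ j : Fin (M+2), Dop j L * AddMonoidAlgebra.single (econf (j+1)) 1

lemma SA_zero : SA (0 : RA M) = 0 := by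
  unfold SA
  rw [Finset.sum_eq_zero]
  intro j _
  rw [Dop_zero, zero_mul]

lemma SA_add (P Q : RA M) : SA (P + Q) = SA P + SA Q := by
  unfold SA
  rw [← Finset.sum_add_distrib]
  exact Finset.sum_congr rfl fun j _ => by rw [Dop_add, add_mul]

lemma SA_smul (c : ℝ≥0∞) (P : RA M) : SA (c • P) = c • SA P := by
  unfold SA
  rw [Finset.smul_sum]
  exact Finset.sum_congr rfl fun j _ => by rw [Dop_smul, smul_mul_assoc]

lemma SA_sum {ι : Type*} (s : Finset ι) (f : ι → RA M) :
    SA (∑ i ∈ s, f i) = ∑ i ∈ s, SA (f i) := by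
  classical
  induction s using Finset.induction_on with
  | empty => simpa using SA_zero
  | insert a s h ih => rw [Finset.sum_insert h, Finset.sum_insert h, SA_add, ih]

lemma SA_mul (P Q : RA M) : SA (P * Q) = SA P * Q + P * SA Q := by
  unfold SA
  rw [Finset.sum_mul, Finset.mul_sum, ← Finset.sum_add_distrib]
  apply Finset.sum_congr rfl
  intro j _
  rw [Dop_mul, add_mul]
  congr 1
  · rw [mul_comm (Dop j P) Q, mul_assoc, mul_comm Q]
  · rw [mul_assoc]

/-- the shift map on configurations. -/
def Tm : Cfg M → Cfg M := fun y i => y (i - 1)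

lemma Tm_add (y z : Cfg M) : Tm (y + z) = Tm y + Tm z := rfl
lemma Tm_inj : Function.Injective (Tm (M := M)) := by
  intro y z h
  funext k
  have := congrFun h (k + 1)
  simpa [Tm] using this

def TmHom : Cfg M →+ Cfg M := ⟨⟨Tm, rfl⟩, fun _ _ => rfl⟩

def TF (L : RA M) : RA M := AddMonoidAlgebra.mapDomain Tm L

lemma TF_zero : TF (0 : RA M) = 0 := AddMonoidAlgebra.mapDomain_zero _
lemma TF_add (P Q : RA M) : TF (P + Q) = TF P + TF Q := AddMonoidAlgebra.mapDomain_add _ _ _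
lemma TF_smul (c : ℝ≥0∞) (P : RA M) : TF (c • P) = c • TF P := by
  unfold TF; ext : 1; simp [Finsupp.mapDomain_smul]
lemma TF_mul (P Q : RA M) : TF (P * Q) = TF P * TF Q :=
  AddMonoidAlgebra.mapDomain_mul (TmHom (M := M)) P Q
lemma TF_single (y : Cfg M) (c : ℝ≥0∞) :
    TF (AddMonoidAlgebra.single y c : RA M) = AddMonoidAlgebra.single (Tm y) c :=
  AddMonoidAlgebra.mapDomain_single
lemma TF_sum {ι : Type*} (s : Finset ι) (f : ι → RA M) :
    TF (∑ i ∈ s, f i) = ∑ i ∈ s, TF (f i) := by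
  classical
  induction s using Finset.induction_on with
  | empty => simpa using TF_zero
  | insert a s h ih => rw [Finset.sum_insert h, Finset.sum_insert h, TF_add, ih]

lemma Tm_econf (k : Fin (M+2)) : Tm (econf k) = econf (k+1) := by
  funext i
  simp only [Tm, econf]
  congr 1
  simp [sub_eq_iff_eq_add]

lemma SA_TF (Q : RA M) : SA (TF Q) = TF (SA Q) := by
  induction Q using AddMonoidAlgebra.induction_linear with
  | zero => rw [TF_zero, SA_zero, TF_zero]
  | add f g hf hg => rw [TF_add, SA_add, SA_add, TF_add, hf, hg]
  | single y b =>
    rw [TF_single]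
    unfold SA
    rw [TF_sum]
    have hA : ∀ j : Fin (M+2),
        Dop j (AddMonoidAlgebra.single (Tm y) b) * AddMonoidAlgebra.single (econf (j+1)) 1
        = AddMonoidAlgebra.single (Tm y + econf (j+1)) ((Tm y j : ℝ≥0∞) * b) := by
      intro j
      rw [Dop_single, sms, mul_one]
    have hB : ∀ j : Fin (M+2),
        TF (Dop j (AddMonoidAlgebra.single y b) * AddMonoidAlgebra.single (econf (j+1)) 1)
        = AddMonoidAlgebra.single (Tm y + econf (j+1+1)) ((y j : ℝ≥0∞) * b) := by
      intro j
      rw [Dop_single, sms, mul_one, TF_single, Tm_add, Tm_econf]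
    rw [Finset.sum_congr rfl (fun j _ => hA j), Finset.sum_congr rfl (fun j _ => hB j)]
    refine (Fintype.sum_equiv (Equiv.addRight (1 : Fin (M+2))) _ _ ?_).symm
    intro j
    simp only [Equiv.coe_addRight]
    have hy : Tm y (j+1) = y j := by
      show y (j + 1 - 1) = y j
      rw [add_sub_cancel_right]
    rw [hy]
def LF (M : ℕ) : ℕ → RA M
  | 0 => AddMonoidAlgebra.single (econf 0) 1
  | (n+1) => (((n:ℝ≥0∞)+1))⁻¹ • SA (LF M n)

lemma nadd1_ne_zero (n : ℕ) : ((n:ℝ≥0∞)+1) ≠ 0 := by simp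
lemma nadd1_ne_top (n : ℕ) : ((n:ℝ≥0∞)+1) ≠ ⊤ := by
  simp [ENNReal.add_eq_top]

lemma SA_LF (n : ℕ) : SA (LF M n) = ((n:ℝ≥0∞)+1) • LF M (n+1) := by
  rw [show LF M (n+1) = (((n:ℝ≥0∞)+1))⁻¹ • SA (LF M n) from rfl, smul_smul,
    ENNReal.mul_inv_cancel (nadd1_ne_zero n) (nadd1_ne_top n), one_smul]

lemma SA_LF0 : SA (LF M 0) = LF M 0 * TF (LF M 0) := by
  have h1 : (LF M 0 : RA M) * TF (LF M 0)
      = AddMonoidAlgebra.single (econf 0 + econf (0+1)) 1 := by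
    show (AddMonoidAlgebra.single (econf 0) 1 : RA M) * TF (AddMonoidAlgebra.single (econf 0) 1)
      = _
    rw [TF_single, Tm_econf, sms, mul_one]
  rw [h1]
  show SA (AddMonoidAlgebra.single (econf 0) 1) = _
  unfold SA
  have hA : ∀ j : Fin (M+2),
      Dop j (AddMonoidAlgebra.single (econf 0) 1) * AddMonoidAlgebra.single (econf (j+1)) 1
      = AddMonoidAlgebra.single (econf 0 + econf (j+1)) ((econf 0 j : ℝ≥0∞)) := by
    intro j
    rw [Dop_single, sms, mul_one, mul_one]
  rw [Finset.sum_congr rfl (fun j _ => hA j), Finset.sum_eq_single 0]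
  · simp [econf]
  · intro j _ hj
    have : (econf (0:Fin (M+2)) j : ℕ) = 0 := by simp [econf, hj]
    rw [this, Nat.cast_zero, AddMonoidAlgebra.single_zero]
  · simp

theorem main_identity : ∀ n : ℕ, 1 ≤ n →
    LF M n = ((n:ℝ≥0∞))⁻¹ • ∑ i ∈ Finset.range n, LF M i * TF (LF M (n-1-i)) := by
  intro n
  induction n with
  | zero => omega
  | succ n ih =>
    intro _
    by_cases hn : 1 ≤ n
    · have hrec : LF M (n+1) = (((n:ℝ≥0∞)+1))⁻¹ • SA (LF M n) := rfl
      rw [hrec, ih hn, SA_smul, SA_sum]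
      have expand : ∀ i ∈ Finset.range n, SA (LF M i * TF (LF M (n-1-i)))
          = ((i:ℝ≥0∞)+1) • (LF M (i+1) * TF (LF M (n-1-i)))
            + (((n-i:ℕ)):ℝ≥0∞) • (LF M i * TF (LF M (n-i))) := by
        intro i hi
        rw [Finset.mem_range] at hi
        rw [SA_mul, SA_LF, SA_TF, SA_LF, TF_smul, smul_mul_assoc, mul_smul_comm,
          show n - 1 - i + 1 = n - i by omega,
          show ((n-1-i : ℕ):ℝ≥0∞) + 1 = ((n-i:ℕ):ℝ≥0∞) by
            rw [show (n-i:ℕ) = (n-1-i) + 1 by omega]; push_cast; ring]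
      rw [Finset.sum_congr rfl expand, Finset.sum_add_distrib]
      have e1 : ∑ i ∈ Finset.range n, ((i:ℝ≥0∞)+1) • (LF M (i+1) * TF (LF M (n-1-i)))
          = ∑ i ∈ Finset.range (n+1), (i:ℝ≥0∞) • (LF M i * TF (LF M (n-i))) := by
        rw [Finset.sum_range_succ' (fun i => (i:ℝ≥0∞) • (LF M i * TF (LF M (n-i))))]
        rw [Nat.cast_zero, zero_smul, add_zero]
        apply Finset.sum_congr rfl
        intro i _
        rw [show n - (i+1) = n - 1 - i by omega]
        push_cast
        rfl
      have e2 : ∑ i ∈ Finset.range n, (((n-i:ℕ)):ℝ≥0∞) • (LF M i * TF (LF M (n-i)))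
          = ∑ i ∈ Finset.range (n+1), (((n-i:ℕ)):ℝ≥0∞) • (LF M i * TF (LF M (n-i))) := by
        rw [Finset.sum_range_succ, Nat.sub_self, Nat.cast_zero, zero_smul, add_zero]
      rw [e1, e2, ← Finset.sum_add_distrib]
      have merge : ∀ i ∈ Finset.range (n+1),
          (i:ℝ≥0∞) • (LF M i * TF (LF M (n-i))) + (((n-i:ℕ)):ℝ≥0∞) • (LF M i * TF (LF M (n-i)))
          = (n:ℝ≥0∞) • (LF M i * TF (LF M (n-i))) := by
        intro i hi
        rw [Finset.mem_range] at hi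
        rw [← add_smul, show (i:ℝ≥0∞) + ((n-i:ℕ):ℝ≥0∞) = (n:ℝ≥0∞) by
          rw [show ((n:ℕ):ℝ≥0∞) = ((i + (n-i) : ℕ):ℝ≥0∞) by
            rw [show i + (n-i) = n from by omega], Nat.cast_add]]
      rw [Finset.sum_congr rfl merge]
      rw [← Finset.smul_sum, smul_smul, smul_smul,
        show ((n:ℝ≥0∞)+1)⁻¹ * (n:ℝ≥0∞)⁻¹ * (n:ℝ≥0∞) = (((n+1:ℕ):ℝ≥0∞))⁻¹ by
          rw [mul_assoc, ENNReal.inv_mul_cancel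
            ((Nat.cast_ne_zero (R := ℝ≥0∞)).mpr (by omega)) (by simp), mul_one]
          congr 1
          push_cast
          ring]
      apply congrArg
      apply Finset.sum_congr rfl
      intro i _
      rw [show n + 1 - 1 - i = n - i from by omega]
    · have hn0 : n = 0 := by omega
      subst hn0
      rw [show LF M 1 = ((((0:ℕ):ℝ≥0∞)+1))⁻¹ • SA (LF M 0) from rfl, SA_LF0]
      norm_num


lemma add_eq_iff_le_sub (x δ r : Cfg M) : x + δ = r ↔ δ ≤ r ∧ x = r - δ := by
  constructor
  · rintro rfl
    refine ⟨fun i => ?_, funext fun i => ?_⟩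
    · show δ i ≤ x i + δ i
      omega
    · show x i = (x i + δ i) - δ i
      omega
  · rintro ⟨h, rfl⟩
    funext i
    have hi : δ i ≤ r i := h i
    show (r i - δ i) + δ i = r i
    omega

lemma mul_single_one_apply (X : RA M) (δ r : Cfg M) :
    (X * AddMonoidAlgebra.single δ (1:ℝ≥0∞)) r = if δ ≤ r then X (r - δ) else 0 := by
  classical
  induction X using AddMonoidAlgebra.induction_linear with
  | zero =>
    rw [zero_mul]
    simp
  | add f g hf hg =>
    rw [add_mul, AddMonoidAlgebra.coeff_add, Finsupp.add_apply, hf, hg, AddMonoidAlgebra.coeff_add,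
      Finsupp.add_apply]
    by_cases h : δ ≤ r <;> simp [h]
  | single x a =>
    rw [sms, mul_one]
    rw [show (AddMonoidAlgebra.single (x + δ) a : RA M) r
      = if x + δ = r then a else 0 by rw [AddMonoidAlgebra.coeff_single, Finsupp.single_apply]]
    by_cases h : δ ≤ r
    · rw [if_pos h]
      rw [show (AddMonoidAlgebra.single x a : RA M) (r - δ)
        = if x = r - δ then a else 0 by rw [AddMonoidAlgebra.coeff_single, Finsupp.single_apply]]
      by_cases h2 : x + δ = r
      · rw [if_pos h2, if_pos ((add_eq_iff_le_sub x δ r).mp h2).2]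
      · rw [if_neg h2, if_neg (fun he => h2 ((add_eq_iff_le_sub x δ r).mpr ⟨h, he⟩))]
    · rw [if_neg h, if_neg (fun h2 => h ((add_eq_iff_le_sub x δ r).mp h2).1)]

lemma SA_apply (L : RA M) (r : Cfg M) :
    SA L r = ∑ j : Fin (M+2), if econf (j+1) ≤ r
      then (((r - econf (j+1) : Cfg M) j : ℕ) : ℝ≥0∞) * L (r - econf (j+1)) else 0 := by
  unfold SA
  rw [AddMonoidAlgebra.coeff_sum, Finset.sum_apply']
  apply Finset.sum_congr rfl
  intro j _
  rw [mul_single_one_apply]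
  by_cases h : econf (j+1) ≤ r
  · rw [if_pos h, if_pos h, Dop_apply]
  · rw [if_neg h, if_neg h]

lemma sum_econf (k : Fin (M+2)) : ∑ i, econf (M:=M) k i = 1 := by
  unfold econf
  rw [Finset.sum_ite_eq' Finset.univ k (fun _ => 1)]
  simp

lemma LF_sum_ne (n : ℕ) (r : Cfg M) (h : ∑ i, r i ≠ n + 1) : LF M n r = 0 := by
  induction n generalizing r with
  | zero =>
    rw [show LF M 0 = AddMonoidAlgebra.single (econf 0) 1 from rfl]
    rw [show (AddMonoidAlgebra.single (econf 0) (1:ℝ≥0∞) : RA M) r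
      = if econf 0 = r then 1 else 0 by rw [AddMonoidAlgebra.coeff_single, Finsupp.single_apply]]
    rw [if_neg]
    rintro rfl
    exact h (sum_econf 0)
  | succ n ih =>
    rw [show LF M (n+1) = (((n:ℝ≥0∞)+1))⁻¹ • SA (LF M n) from rfl, AddMonoidAlgebra.coeff_smul, Finsupp.smul_apply,
      smul_eq_mul, SA_apply, Finset.sum_eq_zero, mul_zero]
    intro j _
    by_cases hle : econf (j+1) ≤ r
    · rw [if_pos hle, ih _ (fun hs => h ?_), mul_zero]
      have h2 : ∑ i, r i = (∑ i, (r - econf (j+1) : Cfg M) i) + ∑ i, econf (M:=M) (j+1) i := by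
        rw [← Finset.sum_add_distrib]
        apply Finset.sum_congr rfl
        intro i _
        have hi : econf (M:=M) (j+1) i ≤ r i := hle i
        show r i = (r i - econf (j+1) i) + econf (j+1) i
        omega
      rw [h2, hs, sum_econf]
    · rw [if_neg hle]

lemma LF_coord_le (n : ℕ) (r : Cfg M) (h : LF M n r ≠ 0) (j : Fin (M+2)) : r j ≤ n + 1 := by
  by_contra hj
  apply h
  apply LF_sum_ne
  intro hs
  have : r j ≤ ∑ i, r i := Finset.single_le_sum (fun i _ => Nat.zero_le _) (Finset.mem_univ j)
  omega

lemma LF_sum_eq (n : ℕ) (r : Cfg M) (h : LF M n r ≠ 0) : ∑ i, r i = n + 1 := by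
  by_contra hs
  exact h (LF_sum_ne n r hs)

lemma sum_Tm (y : Cfg M) : ∑ i, Tm (M:=M) y i = ∑ i, y i := by
  refine Fintype.sum_equiv (Equiv.subRight (1 : Fin (M+2))) _ _ ?_
  intro i
  rfl

section Prob

variable {M : ℕ} {Ω : Type*} [MeasurableSpace Ω] {μ : Measure Ω}
  {R : ℕ → Ω → Fin (M+2) → ℝ} {j0 : Fin (M+2)}

def embed (r : Cfg M) : Fin (M+2) → ℝ := fun i => (r i : ℝ)

lemma embed_inj : Function.Injective (embed (M:=M)) := by
  intro a b h
  funext i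
  have := congrFun h i
  simpa [embed] using this

lemma val_add_one (j : Fin (M+2)) : ((j + 1 : Fin (M+2)) : ℕ) = ((j:ℕ)+1) % (M+2) := by
  rw [Fin.add_def, Fin.val_one]

lemma dd_apply (j i : Fin (M+2)) :
    (if (i:ℕ) = ((j:ℕ)+1) % (M+2) then (1:ℝ) else 0) = embed (econf (j+1)) i := by
  have hiff : ((i:ℕ) = ((j:ℕ)+1) % (M+2)) ↔ i = j + 1 := by
    rw [Fin.ext_iff, val_add_one]
  unfold embed econf
  by_cases h : i = j + 1
  · rw [if_pos (hiff.mpr h), if_pos h]; norm_num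
  · rw [if_neg (fun hh => h (hiff.mp hh)), if_neg h]; norm_num

def urnEvent (R : ℕ → Ω → Fin (M+2) → ℝ) (n : ℕ) (j : Fin (M+2)) : Set Ω :=
  {ω | R (n+1) ω = fun i => R n ω i + embed (econf (j+1)) i}

lemma stepEvent_eq (n : ℕ) (j : Fin (M+2)) :
    {ω | R (n + 1) ω = fun i => R n ω i
        + if (i : ℕ) = ((j : ℕ) + 1) % (M+2) then 1 else 0}
      = urnEvent R n j := by
  unfold urnEvent
  apply Set.ext
  intro ω
  have hfe : (fun i => R n ω i + if (i:ℕ) = ((j:ℕ)+1) % (M+2) then (1:ℝ) else 0)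
      = fun i => R n ω i + embed (econf (j+1)) i := by
    funext i
    rw [dd_apply]
  show (R (n+1) ω = _) ↔ (R (n+1) ω = _)
  rw [hfe]

lemma urnEvent_meas (hR : IsCyclicUrn μ (M+2) j0 R) (n : ℕ) (j : Fin (M+2)) :
    MeasurableSet (urnEvent R n j) := by
  have he : urnEvent R n j
      = ⋂ i : Fin (M+2), {ω | R (n+1) ω i = R n ω i + embed (econf (j+1)) i} := by
    ext ω
    simp only [urnEvent, Set.mem_iInter, Set.mem_setOf_eq, funext_iff]
  rw [he]
  exact MeasurableSet.iInter fun i => measurableSet_eq_fun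
    ((measurable_pi_apply i).comp (hR.meas (n+1)))
    (((measurable_pi_apply i).comp (hR.meas n)).add_const _)

lemma filt_le (hR : IsCyclicUrn μ (M+2) j0 R) (n : ℕ) :
    urnFilt (M+2) R n ≤ ‹MeasurableSpace Ω› := by
  apply iSup₂_le
  intro i _
  exact (hR.meas i).comap_le

lemma measurableSet_filt (n : ℕ) (v : Fin (M+2) → ℝ) :
    MeasurableSet[urnFilt (M+2) R n] ((R n)⁻¹' {v}) := by
  have h1 : MeasurableSpace.comap (R n) inferInstance ≤ urnFilt (M+2) R n :=
    le_iSup₂ (f := fun i (_ : i ∈ Finset.range (n+1)) =>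
      MeasurableSpace.comap (R i) inferInstance) n (Finset.self_mem_range_succ n)
  exact h1 _ ⟨{v}, measurableSet_singleton v, rfl⟩

lemma cond_step (hR : IsCyclicUrn μ (M+2) j0 R) (n : ℕ) (j : Fin (M+2))
    (v : Fin (M+2) → ℝ) (hvj : 0 ≤ v j) :
    μ (urnEvent R n j ∩ (R n)⁻¹' {v})
      = ENNReal.ofReal (v j / (n+1)) * μ ((R n)⁻¹' {v}) := by
  haveI := hR.isProb
  have hle := filt_le hR n
  have hstep := hR.step n j
  rw [stepEvent_eq] at hstep
  have hE := urnEvent_meas hR n j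
  have hA : MeasurableSet ((R n)⁻¹' {v}) := hR.meas n (measurableSet_singleton v)
  have hint : Integrable ((urnEvent R n j).indicator (fun _ => (1:ℝ))) μ :=
    (integrable_indicator_iff hE).mpr (integrableOn_const (measure_ne_top μ _))
  have h1 : ∫ ω in (R n)⁻¹' {v}, (urnEvent R n j).indicator (fun _ => (1:ℝ)) ω ∂μ
      = ∫ ω in (R n)⁻¹' {v}, (μ[(urnEvent R n j).indicator (fun _ => (1:ℝ))
          | urnFilt (M+2) R n]) ω ∂μ :=
    (setIntegral_condExp hle hint (measurableSet_filt n v)).symm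
  have h2 : ∫ ω in (R n)⁻¹' {v}, (μ[(urnEvent R n j).indicator (fun _ => (1:ℝ))
        | urnFilt (M+2) R n]) ω ∂μ
      = ∫ ω in (R n)⁻¹' {v}, (fun ω => R n ω j / (n+1)) ω ∂μ :=
    setIntegral_congr_ae hA (hstep.mono fun ω hω _ => hω)
  have h3 : ∫ ω in (R n)⁻¹' {v}, (fun ω => R n ω j / (n+1)) ω ∂μ
      = (v j / (n+1)) * (μ ((R n)⁻¹' {v})).toReal := by
    rw [setIntegral_congr_fun hA (g := fun _ => v j / (n+1))
      (fun ω hω => by rw [show R n ω = v from hω]), setIntegral_const, Measure.real_def, smul_eq_mul, mul_comm]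
  have h4 : ∫ ω in (R n)⁻¹' {v}, (urnEvent R n j).indicator (fun _ => (1:ℝ)) ω ∂μ
      = (μ (urnEvent R n j ∩ (R n)⁻¹' {v})).toReal := by
    rw [setIntegral_indicator hE, setIntegral_const, Measure.real_def, smul_eq_mul, mul_one, Set.inter_comm]
  have h5 : (μ (urnEvent R n j ∩ (R n)⁻¹' {v})).toReal
      = (v j / (n+1)) * (μ ((R n)⁻¹' {v})).toReal := by
    rw [← h4, h1, h2, h3]
  have hfin1 : μ (urnEvent R n j ∩ (R n)⁻¹' {v}) ≠ ⊤ := measure_ne_top μ _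
  have hfin2 : ENNReal.ofReal (v j / (n+1)) * μ ((R n)⁻¹' {v}) ≠ ⊤ :=
    ENNReal.mul_ne_top ENNReal.ofReal_ne_top (measure_ne_top μ _)
  apply (ENNReal.toReal_eq_toReal_iff' hfin1 hfin2).mp
  rw [ENNReal.toReal_mul, ENNReal.toReal_ofReal (by positivity), h5]


lemma R_nonneg (hR : IsCyclicUrn μ (M+2) j0 R) (n : ℕ) (ω : Ω) (i : Fin (M+2)) :
    0 ≤ R n ω i := by
  obtain ⟨z, hz⟩ := hR.natVal n ω i
  rw [hz]
  positivity

lemma fin_ne_add_one (j : Fin (M+2)) : j ≠ j + 1 := by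
  intro h
  have h2 := val_add_one j
  rw [← h] at h2
  have hlt : (j:ℕ) < M + 2 := j.isLt
  by_cases hc : (j:ℕ) + 1 < M + 2
  · rw [Nat.mod_eq_of_lt hc] at h2
    omega
  · have hj : (j:ℕ) = M + 1 := by omega
    rw [hj, show M + 1 + 1 = M + 2 from rfl, Nat.mod_self] at h2
    omega

lemma econf_inj (k k' : Fin (M+2)) (h : econf (M:=M) k = econf k') : k = k' := by
  have := congrFun h k
  simp only [econf, if_pos rfl] at this
  by_cases hk : k = k'
  · exact hk
  · rw [if_neg hk] at this
    exact absurd this one_ne_zero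

lemma urnEvent_disjoint (n : ℕ) :
    Pairwise (Function.onFun Disjoint (urnEvent R n)) := by
  intro j j' hjj
  rw [Function.onFun, Set.disjoint_left]
  intro ω hω hω'
  apply hjj
  have h1 : (fun i => R n ω i + embed (econf (j+1)) i)
      = fun i => R n ω i + embed (econf (j'+1)) i := by
    rw [← show R (n+1) ω = _ from hω, ← show R (n+1) ω = _ from hω']
  have h2 : econf (M:=M) (j+1) = econf (j'+1) := by
    apply embed_inj
    funext i
    have := congrFun h1 i
    simpa using this
  have h3 := econf_inj _ _ h2
  exact add_right_cancel h3

lemma embed_sum_econf (j : Fin (M+2)) : ∑ i, embed (econf (M:=M) j) i = 1 := by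
  unfold embed
  rw [← Nat.cast_sum, sum_econf, Nat.cast_one]

lemma integrable_coord (hR : IsCyclicUrn μ (M+2) j0 R) (n : ℕ) (j : Fin (M+2))
    (hsum : ∀ᵐ ω ∂μ, ∑ i, R n ω i = (n:ℝ) + 1) :
    Integrable (fun ω => R n ω j) μ := by
  haveI := hR.isProb
  apply Integrable.mono' (integrable_const ((n:ℝ)+1))
    ((measurable_pi_apply j).comp (hR.meas n)).aestronglyMeasurable
  filter_upwards [hsum] with ω hω
  show ‖R n ω j‖ ≤ (n:ℝ)+1
  rw [Real.norm_eq_abs, _root_.abs_of_nonneg (R_nonneg hR n ω j)]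
  calc R n ω j ≤ ∑ i, R n ω i :=
        Finset.single_le_sum (fun i _ => R_nonneg hR n ω i) (Finset.mem_univ j)
    _ = (n:ℝ) + 1 := hω

lemma measure_urnEvent (hR : IsCyclicUrn μ (M+2) j0 R) (n : ℕ) (j : Fin (M+2))
    (hsum : ∀ᵐ ω ∂μ, ∑ i, R n ω i = (n:ℝ) + 1) :
    (μ (urnEvent R n j)).toReal = ∫ ω, R n ω j / ((n:ℝ)+1) ∂μ := by
  haveI := hR.isProb
  have hle := filt_le hR n
  have hstep := hR.step n j
  rw [stepEvent_eq] at hstep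
  have hE := urnEvent_meas hR n j
  have hint : Integrable ((urnEvent R n j).indicator (fun _ => (1:ℝ))) μ :=
    (integrable_indicator_iff hE).mpr (integrableOn_const (measure_ne_top μ _))
  have h1 : ∫ ω, (urnEvent R n j).indicator (fun _ => (1:ℝ)) ω ∂μ
      = (μ (urnEvent R n j)).toReal := by
    rw [integral_indicator_const _ hE, Measure.real_def, smul_eq_mul, mul_one]
  rw [← h1, ← integral_condExp hle (f := (urnEvent R n j).indicator (fun _ => (1:ℝ)))]
  apply integral_congr_ae
  filter_upwards [hstep] with ω hω
  rw [hω]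

lemma ae_sum (hR : IsCyclicUrn μ (M+2) j0 R) :
    ∀ n, ∀ᵐ ω ∂μ, ∑ i, R n ω i = (n:ℝ) + 1 := by
  haveI := hR.isProb
  intro n
  induction n with
  | zero =>
    apply Filter.Eventually.of_forall
    intro ω
    rw [hR.init ω, Finset.sum_ite_eq' Finset.univ j0 (fun _ => (1:ℝ))]
    simp
  | succ n ih =>
    have hU : μ (⋃ j, urnEvent R n j)ᶜ = 0 := by
      have hmeas : ∀ j, MeasurableSet (urnEvent R n j) := urnEvent_meas hR n
      have h2 : μ (⋃ j, urnEvent R n j) = ∑ j, μ (urnEvent R n j) := by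
        rw [measure_iUnion (urnEvent_disjoint n) hmeas, tsum_fintype]
      have h3 : (μ (⋃ j, urnEvent R n j)).toReal = 1 := by
        rw [h2, ENNReal.toReal_sum (fun j _ => measure_ne_top μ _)]
        have h4 : ∀ j, (μ (urnEvent R n j)).toReal = ∫ ω, R n ω j / ((n:ℝ)+1) ∂μ :=
          fun j => measure_urnEvent hR n j ih
        rw [Finset.sum_congr rfl (fun j _ => h4 j), ← integral_finset_sum]
        · rw [show ∫ ω, (∑ j, R n ω j / ((n:ℝ)+1)) ∂μ = ∫ (_ : Ω), (1:ℝ) ∂μ from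
            integral_congr_ae (by
              filter_upwards [ih] with ω hω
              rw [← Finset.sum_div, hω, div_self (by positivity)])]
          rw [integral_const, Measure.real_def, measure_univ, ENNReal.toReal_one, smul_eq_mul, one_mul]
        · exact fun j _ => (integrable_coord hR n j ih).div_const _
      have h5 : μ (⋃ j, urnEvent R n j) = 1 := by
        rw [← ENNReal.ofReal_toReal (measure_ne_top μ _), h3, ENNReal.ofReal_one]
      rw [measure_compl (MeasurableSet.iUnion hmeas) (measure_ne_top μ _), h5, measure_univ,
        tsub_self]
    have hU2 : ∀ᵐ ω ∂μ, ω ∈ ⋃ j, urnEvent R n j := by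
      rw [ae_iff]
      exact hU
    filter_upwards [ih, hU2] with ω hω hωU
    obtain ⟨j, hj⟩ := Set.mem_iUnion.mp hωU
    rw [show R (n+1) ω = fun i => R n ω i + embed (econf (j+1)) i from hj,
      Finset.sum_add_distrib, hω, embed_sum_econf]
    push_cast
    ring

lemma ae_union (hR : IsCyclicUrn μ (M+2) j0 R) (n : ℕ) :
    ∀ᵐ ω ∂μ, ω ∈ ⋃ j, urnEvent R n j := by
  haveI := hR.isProb
  have ih := ae_sum hR n
  have hmeas : ∀ j, MeasurableSet (urnEvent R n j) := urnEvent_meas hR n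
  have h2 : μ (⋃ j, urnEvent R n j) = ∑ j, μ (urnEvent R n j) := by
    rw [measure_iUnion (urnEvent_disjoint n) hmeas, tsum_fintype]
  have h3 : (μ (⋃ j, urnEvent R n j)).toReal = 1 := by
    rw [h2, ENNReal.toReal_sum (fun j _ => measure_ne_top μ _)]
    have h4 : ∀ j, (μ (urnEvent R n j)).toReal = ∫ ω, R n ω j / ((n:ℝ)+1) ∂μ :=
      fun j => measure_urnEvent hR n j ih
    rw [Finset.sum_congr rfl (fun j _ => h4 j), ← integral_finset_sum]
    · rw [show ∫ ω, (∑ j, R n ω j / ((n:ℝ)+1)) ∂μ = ∫ (_ : Ω), (1:ℝ) ∂μ from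
        integral_congr_ae (by
          filter_upwards [ih] with ω hω
          rw [← Finset.sum_div, hω, div_self (by positivity)])]
      rw [integral_const, Measure.real_def, measure_univ, ENNReal.toReal_one, smul_eq_mul, one_mul]
    · exact fun j _ => (integrable_coord hR n j ih).div_const _
  have h5 : μ (⋃ j, urnEvent R n j) = 1 := by
    rw [← ENNReal.ofReal_toReal (measure_ne_top μ _), h3, ENNReal.ofReal_one]
  rw [ae_iff]
  show μ (⋃ j, urnEvent R n j)ᶜ = 0
  rw [measure_compl (MeasurableSet.iUnion hmeas) (measure_ne_top μ _), h5, measure_univ,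
    tsub_self]

lemma ofReal_div_nat (a n : ℕ) :
    ENNReal.ofReal ((a:ℝ) / ((n:ℝ)+1)) = (a:ℝ≥0∞) * ((n:ℝ≥0∞)+1)⁻¹ := by
  rw [div_eq_mul_inv, ENNReal.ofReal_mul (by positivity),
    ENNReal.ofReal_inv_of_pos (by positivity), ENNReal.ofReal_natCast,
    ENNReal.ofReal_add (by positivity) zero_le_one, ENNReal.ofReal_natCast,
    ENNReal.ofReal_one]

lemma law (hR : IsCyclicUrn μ (M+2) 0 R) :
    ∀ n (r : Cfg M), μ ((R n)⁻¹' {embed r}) = LF M n r := by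
  haveI := hR.isProb
  intro n
  induction n with
  | zero =>
    intro r
    have h0 : R 0 = fun _ => embed (econf 0) := by
      funext ω
      rw [hR.init ω]
      funext i
      unfold embed econf
      by_cases h : i = 0 <;> simp [h]
    rw [show LF M 0 = AddMonoidAlgebra.single (econf 0) 1 from rfl]
    rw [show (AddMonoidAlgebra.single (econf 0) (1:ℝ≥0∞) : RA M) r
      = if econf 0 = r then 1 else 0 by rw [AddMonoidAlgebra.coeff_single, Finsupp.single_apply]]
    by_cases h : econf (M := M) 0 = r
    · rw [if_pos h, ← h, h0]
      have : (fun (_ : Ω) => embed (econf (M:=M) 0)) ⁻¹' {embed (econf (M:=M) 0)} = Set.univ := by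
        ext ω
        simp
      rw [this, measure_univ]
    · rw [if_neg h, h0]
      have : (fun (_ : Ω) => embed (econf (M:=M) 0)) ⁻¹' {embed r} = ∅ := by
        ext ω
        simp only [Set.mem_preimage, Set.mem_singleton_iff, Set.mem_empty_iff_false, iff_false]
        exact fun he => h (embed_inj he)
      rw [this, measure_empty]
  | succ n ih =>
    intro r
    set S := (R (n+1))⁻¹' {embed r} with hS
    have hSmeas : MeasurableSet S := hR.meas (n+1) (measurableSet_singleton _)
    have hUc : μ (⋃ j, urnEvent R n j)ᶜ = 0 := by
      have := ae_union hR n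
      rw [ae_iff] at this
      exact this
    have hSU : μ (S ∩ ⋃ j, urnEvent R n j) = μ S := by
      apply le_antisymm (measure_mono Set.inter_subset_left)
      calc μ S ≤ μ (S ∩ ⋃ j, urnEvent R n j) + μ (S \ ⋃ j, urnEvent R n j) :=
            measure_le_inter_add_diff μ S _
        _ ≤ μ (S ∩ ⋃ j, urnEvent R n j) + μ (⋃ j, urnEvent R n j)ᶜ :=
            add_le_add le_rfl (measure_mono (Set.diff_subset_compl _ _))
        _ = μ (S ∩ ⋃ j, urnEvent R n j) := by rw [hUc, add_zero]
    have hsplit : μ S = ∑ j, μ (S ∩ urnEvent R n j) := by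
      rw [← hSU, Set.inter_iUnion, measure_iUnion, tsum_fintype]
      · intro j j' hjj
        exact (Set.disjoint_left.mpr fun ω hω hω' =>
          Set.disjoint_left.mp (urnEvent_disjoint (R := R) n hjj) hω.2 hω'.2)
      · exact fun j => hSmeas.inter (urnEvent_meas hR n j)
    -- identify each term
    have hterm : ∀ j : Fin (M+2), μ (S ∩ urnEvent R n j)
        = if econf (j+1) ≤ r
            then ((n:ℝ≥0∞)+1)⁻¹ * ((((r - econf (j+1) : Cfg M) j : ℕ) : ℝ≥0∞)
              * LF M n (r - econf (j+1)))
            else 0 := by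
      intro j
      set v : Fin (M+2) → ℝ := fun i => embed r i - embed (econf (j+1)) i with hv
      have hSE : S ∩ urnEvent R n j = urnEvent R n j ∩ (R n)⁻¹' {v} := by
        ext ω
        simp only [Set.mem_inter_iff, hS, Set.mem_preimage, Set.mem_singleton_iff]
        constructor
        · rintro ⟨h1, h2⟩
          refine ⟨h2, ?_⟩
          funext i
          have := congrFun (show (fun i => R n ω i + embed (econf (j+1)) i) = embed r from
            (show R (n+1) ω = _ from h2) ▸ h1) i
          rw [hv]
          dsimp only at this ⊢
          linarith
        · rintro ⟨h2, h1⟩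
          refine ⟨?_, h2⟩
          rw [show R (n+1) ω = _ from h2]
          funext i
          have := congrFun h1 i
          rw [hv] at this
          dsimp only at this ⊢
          linarith
      rw [hSE]
      by_cases hc : econf (j+1) ≤ r
      · have hve : v = embed (r - econf (j+1)) := by
          funext i
          rw [hv]
          unfold embed
          rw [show ((r - econf (j+1) : Cfg M) i : ℕ) = r i - econf (j+1) i from rfl,
            Nat.cast_sub (hc i)]
        have hvj : v j = (((r - econf (j+1) : Cfg M) j : ℕ) : ℝ) := by
          rw [hve]; rfl
        rw [if_pos hc, hve, cond_step hR n j _ (by rw [← hve, hvj]; positivity), ih]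
        rw [← hve, hvj, ofReal_div_nat]
        ring
      · rw [if_neg hc]
        have hempty : (R n)⁻¹' {v} = ∅ := by
          obtain ⟨i0, hi0⟩ : ∃ i0, ¬ (econf (M:=M) (j+1) i0 ≤ r i0) := by
            by_contra hall
            push_neg at hall
            exact hc fun i => hall i
          have he1 : econf (M:=M) (j+1) i0 = 1 := by
            have hi0' : ¬ (if i0 = j + 1 then 1 else 0) ≤ r i0 := hi0
            by_cases h : i0 = j+1
            · show (if i0 = j+1 then 1 else 0) = 1
              rw [if_pos h]
            · rw [if_neg h] at hi0'
              omega
          have hr0 : r i0 = 0 := by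
            rw [he1] at hi0
            omega
          ext ω
          simp only [Set.mem_preimage, Set.mem_singleton_iff, Set.mem_empty_iff_false,
            iff_false]
          intro hvv
          have h1 := congrFun hvv i0
          obtain ⟨z, hz⟩ := hR.natVal n ω i0
          rw [hz, hv] at h1
          dsimp only at h1
          have h2 : embed r i0 = 0 := by unfold embed; rw [hr0]; norm_num
          have h3 : embed (econf (M:=M) (j+1)) i0 = 1 := by unfold embed; rw [he1]; norm_num
          rw [h2, h3] at h1
          have hzn : (0:ℝ) ≤ z := Nat.cast_nonneg z
          linarith only [h1, hzn]
        rw [hempty, Set.inter_empty, measure_empty]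
    rw [hsplit, Finset.sum_congr rfl (fun j _ => hterm j)]
    rw [show LF M (n+1) = (((n:ℝ≥0∞)+1))⁻¹ • SA (LF M n) from rfl, AddMonoidAlgebra.coeff_smul, Finsupp.smul_apply,
      smul_eq_mul, SA_apply, Finset.mul_sum]
    apply Finset.sum_congr rfl
    intro j _
    by_cases hc : econf (j+1) ≤ r
    · rw [if_pos hc, if_pos hc]
    · rw [if_neg hc, if_neg hc, mul_zero]


lemma measure_partition {α : Type*} [MeasurableSpace α] [MeasurableSingletonClass α]
    {X : Ω → α} (hX : Measurable X) (F : Finset α)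
    (hae : ∀ᵐ ω ∂μ, X ω ∈ (F : Set α)) {A : Set Ω} (hA : MeasurableSet A) :
    μ A = ∑ v ∈ F, μ (A ∩ X⁻¹' {v}) := by
  have hc : μ (X⁻¹' (F : Set α))ᶜ = 0 := by
    rw [ae_iff] at hae
    exact hae
  have h1 : μ (A ∩ X⁻¹' (F : Set α)) = μ A := by
    apply le_antisymm (measure_mono Set.inter_subset_left)
    calc μ A ≤ μ (A ∩ X⁻¹' (F : Set α)) + μ (A \ X⁻¹' (F : Set α)) :=
          measure_le_inter_add_diff μ A _
      _ ≤ μ (A ∩ X⁻¹' (F : Set α)) + μ (X⁻¹' (F : Set α))ᶜ :=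
          add_le_add le_rfl (measure_mono (Set.diff_subset_compl _ _))
      _ = μ (A ∩ X⁻¹' (F : Set α)) := by rw [hc, add_zero]
  have h2 : A ∩ X⁻¹' (F : Set α) = ⋃ v ∈ F, A ∩ X⁻¹' {v} := by
    ext ω
    simp only [Set.mem_inter_iff, Set.mem_preimage, Finset.mem_coe, Set.mem_iUnion,
      Set.mem_singleton_iff]
    constructor
    · rintro ⟨hA', hF⟩
      exact ⟨X ω, hF, hA', rfl⟩
    · rintro ⟨v, hv, hA', hXv⟩
      exact ⟨hA', hXv ▸ hv⟩
  rw [← h1, h2, measure_biUnion_finset]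
  · intro v _ v' _ hne
    exact Set.disjoint_left.mpr fun ω hω hω' => hne (hω.2.symm.trans hω'.2)
  · exact fun v _ => hA.inter (hX (measurableSet_singleton v))

def FN (M n : ℕ) : Finset (Cfg M) :=
  (Finset.univ : Finset (Fin (M+2) → Fin (n+2))).image (fun f i => (f i : ℕ))

lemma mem_FN {r : Cfg M} {n : ℕ} : r ∈ FN M n ↔ ∀ i, r i ≤ n+1 := by
  simp only [FN, Finset.mem_image, Finset.mem_univ, true_and]
  constructor
  · rintro ⟨f, rfl⟩ i
    exact Nat.lt_succ_iff.mp (f i).isLt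
  · intro h
    refine ⟨fun i => ⟨r i, by have := h i; omega⟩, rfl⟩

lemma ae_mem_FN (hR : IsCyclicUrn μ (M+2) j0 R) (t n : ℕ) (ht : t ≤ n) :
    ∀ᵐ ω ∂μ, R t ω ∈ (((FN M n).image embed : Finset (Fin (M+2) → ℝ)) : Set (Fin (M+2) → ℝ)) := by
  filter_upwards [ae_sum hR t] with ω hω
  set r : Cfg M := fun i => (hR.natVal t ω i).choose with hrdef
  have hre : R t ω = embed r := by
    funext i
    rw [show embed r i = ((hR.natVal t ω i).choose : ℝ) from rfl]
    exact (hR.natVal t ω i).choose_spec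
  have hsum : ∑ i, r i = t + 1 := by
    have : ((∑ i, r i : ℕ) : ℝ) = ((t + 1 : ℕ) : ℝ) := by
      rw [Nat.cast_sum]
      rw [show (∑ i, (r i : ℝ)) = ∑ i, R t ω i from
        Finset.sum_congr rfl (fun i _ => by rw [hre]; rfl)]
      rw [hω]
      push_cast
      ring
    exact_mod_cast this
  have hmem : r ∈ FN M n := by
    rw [mem_FN]
    intro i
    have : r i ≤ ∑ i', r i' := Finset.single_le_sum (fun i' _ => Nat.zero_le _) (Finset.mem_univ i)
    omega
  rw [Finset.coe_image]
  exact ⟨r, hmem, hre.symm⟩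

lemma lawSum (hR : IsCyclicUrn μ (M+2) 0 R) (t n : ℕ) (ht : t ≤ n)
    {s : Set (Fin (M+2) → ℝ)} (hs : MeasurableSet s) :
    μ ((R t)⁻¹' s) = ∑ r ∈ FN M n, if embed r ∈ s then LF M t r else 0 := by
  rw [measure_partition (hR.meas t) ((FN M n).image embed) (ae_mem_FN hR t n ht)
    (hR.meas t hs)]
  rw [Finset.sum_image (fun x _ y _ h => embed_inj h)]
  apply Finset.sum_congr rfl
  intro r _
  by_cases h : embed r ∈ s
  · rw [if_pos h, ← law hR t r]
    congr 1
    ext ω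
    simp only [Set.mem_inter_iff, Set.mem_preimage, Set.mem_singleton_iff]
    exact ⟨fun hx => hx.2, fun hx => ⟨by rw [hx]; exact h, hx⟩⟩
  · rw [if_neg h]
    have : (R t)⁻¹' s ∩ (R t)⁻¹' {embed r} = ∅ := by
      ext ω
      simp only [Set.mem_inter_iff, Set.mem_preimage, Set.mem_singleton_iff,
        Set.mem_empty_iff_false, iff_false]
      rintro ⟨h1, h2⟩
      exact h (h2 ▸ h1)
    rw [this, measure_empty]

lemma mulVec_embed (y : Cfg M) :
    (repA (M+2)).transpose.mulVec (embed y) = embed (Tm y) := by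
  funext i
  show ∑ k, (repA (M+2)).transpose i k * embed y k = embed (Tm y) i
  have hcond : ∀ k : Fin (M+2), (repA (M+2)).transpose i k = if k = i - 1 then 1 else 0 := by
    intro k
    rw [Matrix.transpose_apply]
    show (if (i:ℕ) = ((k:ℕ)+1) % (M+2) then (1:ℝ) else 0) = _
    have hiff : ((i:ℕ) = ((k:ℕ)+1) % (M+2)) ↔ k = i - 1 := by
      rw [← val_add_one, ← Fin.ext_iff, eq_comm, ← eq_sub_iff_add_eq (a := k) (b := i) (c := 1)]
    by_cases h : k = i - 1
    · rw [if_pos (hiff.mpr h), if_pos h]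
    · rw [if_neg (fun hh => h (hiff.mp hh)), if_neg h]
  rw [Finset.sum_congr rfl (fun k _ => by rw [hcond k, ite_mul, one_mul, zero_mul]),
    Finset.sum_ite_eq' Finset.univ (i-1) (fun k => embed y k), if_pos (Finset.mem_univ _)]
  rfl

lemma mul_TF_apply (P Q : RA M) (n : ℕ) (hP : ∀ x, P x ≠ 0 → x ∈ FN M n)
    (hQ : ∀ y, Q y ≠ 0 → y ∈ FN M n) (r : Cfg M) :
    (P * TF Q) r = ∑ x ∈ FN M n, ∑ y ∈ FN M n,
      if x + Tm y = r then P x * Q y else 0 := by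
  classical
  rw [AddMonoidAlgebra.coeff_mul]
  have hinner : ∀ (a : ℝ≥0∞), ((TF Q).coeff.sum fun z b => if a * b = a * b then (0:ℝ≥0∞) else 0) = 0 := by
    intro a; simp
  have step1 : (P.coeff.sum fun x a => (TF Q).coeff.sum fun z b => if x + z = r then a * b else 0)
      = P.coeff.sum fun x a => Q.coeff.sum fun y b => if x + Tm y = r then a * b else 0 := by
    apply Finsupp.sum_congr
    intro x _
    exact Finsupp.sum_mapDomain_index_inj (f := Tm) Tm_inj
  rw [step1]
  rw [Finsupp.sum_of_support_subset P.coeff (fun x hx => hP x (Finsupp.mem_support_iff.mp hx)) _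
    (fun x _ => by simp [Finsupp.sum])]
  apply Finset.sum_congr rfl
  intro x _
  rw [Finsupp.sum_of_support_subset Q.coeff (fun y hy => hQ y (Finsupp.mem_support_iff.mp hy)) _
    (fun y _ => by simp)]

lemma LF_mem_FN {n t : ℕ} (ht : t ≤ n) {x : Cfg M} (hx : LF M t x ≠ 0) : x ∈ FN M n := by
  rw [mem_FN]
  intro i
  have := LF_coord_le t x hx i
  omega


lemma add_Tm_mem_FN {t q n : ℕ} (htq : t + q + 1 = n) {x y : Cfg M}
    (hx : LF M t x ≠ 0) (hy : LF M q y ≠ 0) : x + Tm y ∈ FN M n := by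
  rw [mem_FN]
  intro i
  have hxs := LF_sum_eq t x hx
  have hys := LF_sum_eq q y hy
  have h1 : x i ≤ t + 1 := by
    have := Finset.single_le_sum (f := x) (fun _ _ => Nat.zero_le _) (Finset.mem_univ i)
    omega
  have h2 : Tm y i ≤ q + 1 := by
    have hsum := sum_Tm y
    have := Finset.single_le_sum (f := Tm (M:=M) y) (fun _ _ => Nat.zero_le _)
      (Finset.mem_univ i)
    omega
  show x i + Tm y i ≤ n + 1
  omega

lemma embed_add_Tm (x y : Cfg M) (i : Fin (M+2)) :
    embed x i + embed (Tm y) i = embed (x + Tm y) i := by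
  unfold embed
  show ((x i : ℝ)) + (Tm y i : ℝ) = ((x i + Tm y i : ℕ) : ℝ)
  push_cast
  ring

end Prob
end S15


open S15 in
theorem stmt15 {Ω Ω₂ : Type*} [MeasurableSpace Ω] [MeasurableSpace Ω₂]
    (μ : Measure Ω) (ν : Measure Ω₂) (m : ℕ) (hm : 2 ≤ m)
    (R : ℕ → Ω → Fin m → ℝ) (hR : IsCyclicUrn μ m ⟨0, by omega⟩ R)
    (n : ℕ) (hn : 1 ≤ n)
    (R' R'' : ℕ → Ω₂ → Fin m → ℝ) (I : Ω₂ → ℕ)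
    (hR' : IsCyclicUrn ν m ⟨0, by omega⟩ R') (hR'' : IsCyclicUrn ν m ⟨0, by omega⟩ R'')
    (hI : Measurable I) (hIlt : ∀ ω, I ω < n)
    (hIunif : ∀ j : ℕ, j < n → ν (I ⁻¹' {j}) = (n : ENNReal)⁻¹)
    (hind1 : IndepFun I (fun ω j => R' j ω) ν)
    (hind2 : IndepFun (fun ω => (I ω, fun j => R' j ω)) (fun ω j => R'' j ω) ν) :
    ν.map (fun ω => fun i =>
        R' (I ω) ω i + (repA m).transpose.mulVec (R'' (n - 1 - I ω) ω) i) =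
      μ.map (R n) := by
  obtain ⟨M, rfl⟩ : ∃ M, m = M + 2 := ⟨m - 2, by omega⟩
  have e0 : (⟨0, by omega⟩ : Fin (M+2)) = 0 := by
    apply Fin.ext
    simp
  have hR0 : IsCyclicUrn μ (M+2) 0 R := e0 ▸ hR
  have hR'0 : IsCyclicUrn ν (M+2) 0 R' := e0 ▸ hR'
  have hR''0 : IsCyclicUrn ν (M+2) 0 R'' := e0 ▸ hR''
  haveI := hR0.isProb
  haveI := hR'0.isProb
  set G : Ω₂ → Fin (M+2) → ℝ := fun ω => fun i =>
      R' (I ω) ω i + (repA (M+2)).transpose.mulVec (R'' (n - 1 - I ω) ω) i with hG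
  have hGmeas : Measurable G := by
    apply measurable_pi_lambda
    intro i
    have hGi : (fun ω => G ω i) = fun ω => ∑ t ∈ Finset.range n,
        if I ω = t then R' t ω i + (repA (M+2)).transpose.mulVec (R'' (n - 1 - t) ω) i
        else 0 := by
      funext ω
      rw [Finset.sum_ite_eq (Finset.range n) (I ω)
        (fun t => R' t ω i + (repA (M+2)).transpose.mulVec (R'' (n - 1 - t) ω) i),
        if_pos (Finset.mem_range.mpr (hIlt ω))]
    rw [hGi]
    apply Finset.measurable_sum
    intro t _
    apply Measurable.ite (hI (measurableSet_singleton t)) ?_ measurable_const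
    have h1 : Measurable fun ω => R' t ω i := (measurable_pi_apply i).comp (hR'0.meas t)
    have h2 : Measurable fun ω => (repA (M+2)).transpose.mulVec (R'' (n-1-t) ω) i := by
      have he : (fun ω => (repA (M+2)).transpose.mulVec (R'' (n-1-t) ω) i)
          = fun ω => ∑ k, (repA (M+2)).transpose i k * R'' (n-1-t) ω k := rfl
      rw [he]
      exact Finset.measurable_sum _ fun k _ =>
        (measurable_const.mul ((measurable_pi_apply k).comp (hR''0.meas _)))
    exact h1.add h2
  refine Measure.ext fun s hs => ?_
  rw [Measure.map_apply hGmeas hs, Measure.map_apply (hR0.meas n) hs,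
    lawSum hR0 n n le_rfl hs]
  have hIae : ∀ᵐ ω ∂ν, I ω ∈ ((Finset.range n : Finset ℕ) : Set ℕ) :=
    Filter.Eventually.of_forall fun ω => by simpa using hIlt ω
  rw [measure_partition hI (Finset.range n) hIae (hGmeas hs)]
  have key_t : ∀ t ∈ Finset.range n, ν (G⁻¹' s ∩ I⁻¹' {t})
      = ∑ x ∈ FN M n, ∑ y ∈ FN M n, if embed (x + Tm y) ∈ s
          then (n:ℝ≥0∞)⁻¹ * LF M t x * LF M (n-1-t) y else 0 := by
    intro t htmem
    rw [Finset.mem_range] at htmem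
    have hA1 : MeasurableSet (G⁻¹' s ∩ I⁻¹' {t}) :=
      (hGmeas hs).inter (hI (measurableSet_singleton t))
    rw [measure_partition (hR'0.meas t) ((FN M n).image embed)
      (ae_mem_FN hR'0 t n (by omega)) hA1,
      Finset.sum_image (fun a _ b _ h => embed_inj h)]
    apply Finset.sum_congr rfl
    intro x _
    have hA2 : MeasurableSet ((G⁻¹' s ∩ I⁻¹' {t}) ∩ (R' t)⁻¹' {embed x}) :=
      hA1.inter (hR'0.meas t (measurableSet_singleton _))
    rw [measure_partition (hR''0.meas (n-1-t)) ((FN M n).image embed)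
      (ae_mem_FN hR''0 (n-1-t) n (by omega)) hA2,
      Finset.sum_image (fun a _ b _ h => embed_inj h)]
    apply Finset.sum_congr rfl
    intro y _
    set B := (I⁻¹' {t} ∩ (R' t)⁻¹' {embed x}) ∩ (R'' (n-1-t))⁻¹' {embed y} with hB
    have hA3 : ((G⁻¹' s ∩ I⁻¹' {t}) ∩ (R' t)⁻¹' {embed x}) ∩ (R'' (n-1-t))⁻¹' {embed y}
        = G⁻¹' s ∩ B := by
      rw [hB]
      ext ω
      simp only [Set.mem_inter_iff]
      tauto
    have hGω : ∀ ω ∈ B, G ω = embed (x + Tm y) := by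
      intro ω hω
      obtain ⟨⟨hIt, hx'⟩, hy'⟩ := hω
      rw [Set.mem_preimage, Set.mem_singleton_iff] at hIt hx' hy'
      funext i
      rw [hG]
      dsimp only
      rw [hIt, hx', hy', mulVec_embed]
      exact embed_add_Tm x y i
    have hνB : ν B = (n:ℝ≥0∞)⁻¹ * LF M t x * LF M (n-1-t) y := by
      have hpre1 : (fun ω => (I ω, fun j => R' j ω))⁻¹'
          (({t} : Set ℕ) ×ˢ {h : ℕ → Fin (M+2) → ℝ | h t = embed x})
          = I⁻¹' {t} ∩ (R' t)⁻¹' {embed x} := by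
        ext ω
        simp only [Set.mem_preimage, Set.mem_prod, Set.mem_singleton_iff, Set.mem_setOf_eq,
          Set.mem_inter_iff]
        try tauto
      have hpre2 : (fun ω (j : ℕ) => R'' j ω)⁻¹' {h : ℕ → Fin (M+2) → ℝ | h (n-1-t) = embed y}
          = (R'' (n-1-t))⁻¹' {embed y} := rfl
      have hpre3 : (fun ω (j : ℕ) => R' j ω)⁻¹' {h : ℕ → Fin (M+2) → ℝ | h t = embed x}
          = (R' t)⁻¹' {embed x} := rfl
      have hmS : MeasurableSet (({t} : Set ℕ) ×ˢ {h : ℕ → Fin (M+2) → ℝ | h t = embed x}) :=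
        (measurableSet_singleton t).prod ((measurable_pi_apply t) (measurableSet_singleton _))
      have hmT : MeasurableSet {h : ℕ → Fin (M+2) → ℝ | h (n-1-t) = embed y} :=
        (measurable_pi_apply (n-1-t)) (measurableSet_singleton _)
      have h2 := hind2.measure_inter_preimage_eq_mul _ _ hmS hmT
      rw [hpre1, hpre2] at h2
      have h1 := hind1.measure_inter_preimage_eq_mul {t}
        {h : ℕ → Fin (M+2) → ℝ | h t = embed x} (measurableSet_singleton t)
        ((measurable_pi_apply t) (measurableSet_singleton _))
      rw [hpre3] at h1
      rw [hB, h2, h1, hIunif t htmem, law hR'0 t x, law hR''0 (n-1-t) y]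
    rw [hA3]
    by_cases hmem : embed (x + Tm y) ∈ s
    · rw [if_pos hmem]
      have hBsub : G⁻¹' s ∩ B = B := by
        apply Set.inter_eq_right.mpr
        intro ω hω
        rw [Set.mem_preimage, hGω ω hω]
        exact hmem
      rw [hBsub, hνB]
    · rw [if_neg hmem]
      have hBempty : G⁻¹' s ∩ B = ∅ := by
        ext ω
        simp only [Set.mem_inter_iff, Set.mem_preimage, Set.mem_empty_iff_false, iff_false]
        rintro ⟨h1, h2⟩
        rw [hGω ω h2] at h1
        exact hmem h1
      rw [hBempty, measure_empty]
  rw [Finset.sum_congr rfl key_t]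
  -- now pure combinatorics
  have hcoef : ∀ r : Cfg M, LF M n r
      = ∑ t ∈ Finset.range n, (n:ℝ≥0∞)⁻¹ * ((LF M t * TF (LF M (n-1-t))) r) := by
    intro r
    rw [main_identity n hn, AddMonoidAlgebra.coeff_smul, Finsupp.smul_apply, smul_eq_mul,
        AddMonoidAlgebra.coeff_sum, Finset.sum_apply',
      Finset.mul_sum]
  have hRHS : ∑ r ∈ FN M n, (if embed r ∈ s then LF M n r else 0)
      = ∑ t ∈ Finset.range n, ∑ r ∈ FN M n,
          if embed r ∈ s then (n:ℝ≥0∞)⁻¹ * ((LF M t * TF (LF M (n-1-t))) r) else 0 := by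
    rw [Finset.sum_comm]
    apply Finset.sum_congr rfl
    intro r _
    by_cases h : embed r ∈ s
    · rw [if_pos h, hcoef r]
      apply Finset.sum_congr rfl
      intro t _
      rw [if_pos h]
    · rw [if_neg h, Finset.sum_congr rfl (fun t _ => if_neg h), Finset.sum_const_zero]
  rw [hRHS]
  apply Finset.sum_congr rfl
  intro t htmem
  rw [Finset.mem_range] at htmem
  have hconv : ∀ r ∈ FN M n, (if embed r ∈ s
        then (n:ℝ≥0∞)⁻¹ * ((LF M t * TF (LF M (n-1-t))) r) else 0)
      = ∑ x ∈ FN M n, ∑ y ∈ FN M n, if x + Tm y = r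
          then (if embed r ∈ s then (n:ℝ≥0∞)⁻¹ * (LF M t x * LF M (n-1-t) y) else 0)
          else 0 := by
    intro r _
    rw [mul_TF_apply (LF M t) (LF M (n-1-t)) n (fun x hx => LF_mem_FN (by omega) hx)
      (fun y hy => LF_mem_FN (by omega) hy)]
    by_cases h : embed r ∈ s
    · rw [if_pos h, Finset.mul_sum]
      apply Finset.sum_congr rfl
      intro x _
      rw [Finset.mul_sum]
      apply Finset.sum_congr rfl
      intro y _
      by_cases hc : x + Tm y = r
      · rw [if_pos hc, if_pos hc, if_pos h]
      · rw [if_neg hc, if_neg hc, mul_zero]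
    · rw [if_neg h]
      rw [Finset.sum_congr rfl (fun x _ => Finset.sum_congr rfl (fun y _ => by
        by_cases hc : x + Tm y = r
        · rw [if_pos hc, if_neg h]
        · rw [if_neg hc]))]
      simp
  have hfinal : ∑ r ∈ FN M n,
        (if embed r ∈ s then (n:ℝ≥0∞)⁻¹ * ((LF M t * TF (LF M (n-1-t))) r) else 0)
      = ∑ x ∈ FN M n, ∑ y ∈ FN M n, if embed (x + Tm y) ∈ s
          then (n:ℝ≥0∞)⁻¹ * LF M t x * LF M (n-1-t) y else 0 := by
    rw [Finset.sum_congr rfl hconv, Finset.sum_comm]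
    apply Finset.sum_congr rfl
    intro x _
    rw [Finset.sum_comm]
    apply Finset.sum_congr rfl
    intro y _
    rw [Finset.sum_ite_eq (FN M n) (x + Tm y)
      (fun r => if embed r ∈ s then (n:ℝ≥0∞)⁻¹ * (LF M t x * LF M (n-1-t) y) else 0)]
    by_cases h0 : LF M t x * LF M (n-1-t) y = 0
    · have hz : (n:ℝ≥0∞)⁻¹ * (LF M t x * LF M (n-1-t) y) = 0 := by rw [h0, mul_zero]
      have hz2 : (n:ℝ≥0∞)⁻¹ * LF M t x * LF M (n-1-t) y = 0 := by rw [mul_assoc, hz]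
      rw [hz2]
      by_cases hin : x + Tm y ∈ FN M n
      · rw [if_pos hin, hz]
        try simp
      · rw [if_neg hin]
        try simp
    · have hx : LF M t x ≠ 0 := fun h => h0 (by rw [h, zero_mul])
      have hy : LF M (n-1-t) y ≠ 0 := fun h => h0 (by rw [h, mul_zero])
      rw [if_pos (add_Tm_mem_FN (by omega) hx hy), mul_assoc]
  exact hfinal.symm

end
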